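/- For positive integers a, b, d (sufficiently large for convergence), ζ_{sl(4)}(a,b,1,d,0,1) = ∑_{i=1}^{a} C(a+b−i−1, b−1) ζ_{sl(4)}(i,0,1,a+b+d−i,0,1) + ∑_{i=1}^{b} C(a+b−i−1, a−1) ζ_{sl(4)}(0,i,1,a+b+d−i,0,1). -/

import Mathlib

set_option maxHeartbeats 1000000


noncomputable def trm (x z : ℝ) (c p q j : ℕ) : ℝ :=
  (Nat.choose (p - j) c : ℝ) / (x ^ (j+1) * z ^ (p + q - j))

lemma trm_pascal (x z : ℝ) (c p q j : ℕ) (hj : j ≤ p) :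
    trm x z (c+1) (p+1) q j = trm x z (c+1) p (q+1) j + trm x z c p (q+1) j := by
  unfold trm
  rw [show p+1-j = (p-j)+1 from by omega, show p+1+q-j = p+(q+1)-j from by omega,
    Nat.choose_succ_succ]
  push_cast
  ring

lemma trm_last (x z : ℝ) (c p q j : ℕ) (hj : p = c + j) :
    trm x z (c+1) (p+1) q j = trm x z c p (q+1) j := by
  unfold trm
  rw [show p+1-j = c+1 from by omega, show p-j = c from by omega,
    Nat.choose_self, Nat.choose_self, show p+1+q-j = p+(q+1)-j from by omega]

lemma trm_zero (x z : ℝ) (p q j : ℕ) :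
    trm x z 0 (p+1) q j = trm x z 0 p (q+1) j := by
  unfold trm
  rw [Nat.choose_zero_right, Nat.choose_zero_right, show p+1+q-j = p+(q+1)-j from by omega]

lemma trm_diag (x z : ℝ) (p q : ℕ) :
    trm x z 0 p q p = 1 / (x ^ (p+1) * z ^ q) := by
  unfold trm
  rw [show p - p = 0 from by omega, Nat.choose_zero_right, show p + q - p = q from by omega]
  norm_num

lemma pf_aux (x y : ℝ) (hx : 0 < x) (hy : 0 < y) : ∀ n a b k : ℕ, a + b ≤ n →
    1 / (x ^ (a+1) * y ^ (b+1) * (x+y) ^ k)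
    = (∑ j ∈ Finset.range (a+1), trm x (x+y) b (a+b) (k+1) j)
    + (∑ j ∈ Finset.range (b+1), trm y (x+y) a (a+b) (k+1) j) := by
  have hxy : (0:ℝ) < x + y := by linarith
  have key : ∀ A B K : ℕ, 1 / (x ^ (A+1) * y ^ (B+1) * (x+y) ^ K)
      = 1 / (x ^ A * y ^ (B+1) * (x+y) ^ (K+1)) + 1 / (x ^ (A+1) * y ^ B * (x+y) ^ (K+1)) := by
    intro A B K
    field_simp
    ring
  have base : ∀ k : ℕ, 1 / (x ^ (0+1) * y ^ (0+1) * (x+y) ^ k)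
      = (∑ j ∈ Finset.range (0+1), trm x (x+y) 0 (0+0) (k+1) j)
      + (∑ j ∈ Finset.range (0+1), trm y (x+y) 0 (0+0) (k+1) j) := by
    intro k
    rw [Finset.sum_range_one, Finset.sum_range_one]
    rw [show trm x (x+y) 0 (0+0) (k+1) 0 = 1 / (x ^ (0+1) * (x+y) ^ (k+1)) from trm_diag x (x+y) 0 (k+1),
      show trm y (x+y) 0 (0+0) (k+1) 0 = 1 / (y ^ (0+1) * (x+y) ^ (k+1)) from trm_diag y (x+y) 0 (k+1)]
    rw [key 0 0 k]
    ring
  intro n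
  induction n with
  | zero =>
    intro a b k hab
    obtain ⟨rfl, rfl⟩ : a = 0 ∧ b = 0 := by omega
    exact base k
  | succ n ih =>
    intro a b k hab
    match a, b with
    | 0, 0 => exact base k
    | 0, b+1 =>
      rw [key 0 (b+1) k, ih 0 b (k+1) (by omega)]
      have hSX : ∑ j ∈ Finset.range (0+1), trm x (x+y) (b+1) (0+(b+1)) (k+1) j
          = ∑ j ∈ Finset.range (0+1), trm x (x+y) b (0+b) (k+1+1) j := by
        rw [Finset.sum_range_one, Finset.sum_range_one,
          show 0+(b+1) = (0+b)+1 from by omega]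
        exact trm_last x (x+y) b (0+b) (k+1) 0 (by omega)
      have hSY : ∑ j ∈ Finset.range (b+1+1), trm y (x+y) 0 (0+(b+1)) (k+1) j
          = (∑ j ∈ Finset.range (b+1), trm y (x+y) 0 (0+b) (k+1+1) j)
            + 1 / (y ^ (b+1+1) * (x+y) ^ (k+1)) := by
        rw [Finset.sum_range_succ]
        congr 1
        · refine Finset.sum_congr rfl fun j hj => ?_
          rw [show 0+(b+1) = (0+b)+1 from by omega]
          exact trm_zero y (x+y) (0+b) (k+1) j
        · rw [show 0+(b+1) = b+1 from by omega]
          exact trm_diag y (x+y) (b+1) (k+1)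
      rw [hSX, hSY]
      ring
    | a+1, 0 =>
      rw [key (a+1) 0 k, ih a 0 (k+1) (by omega)]
      have hSX : ∑ j ∈ Finset.range (a+1+1), trm x (x+y) 0 (a+1+0) (k+1) j
          = (∑ j ∈ Finset.range (a+1), trm x (x+y) 0 (a+0) (k+1+1) j)
            + 1 / (x ^ (a+1+1) * (x+y) ^ (k+1)) := by
        rw [Finset.sum_range_succ]
        congr 1
        · refine Finset.sum_congr rfl fun j hj => ?_
          rw [show a+1+0 = (a+0)+1 from by omega]
          exact trm_zero x (x+y) (a+0) (k+1) j
        · rw [show a+1+0 = a+1 from by omega]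
          exact trm_diag x (x+y) (a+1) (k+1)
      have hSY : ∑ j ∈ Finset.range (0+1), trm y (x+y) (a+1) (a+1+0) (k+1) j
          = ∑ j ∈ Finset.range (0+1), trm y (x+y) a (a+0) (k+1+1) j := by
        rw [Finset.sum_range_one, Finset.sum_range_one,
          show a+1+0 = (a+0)+1 from by omega]
        exact trm_last y (x+y) a (a+0) (k+1) 0 (by omega)
      rw [hSX, hSY]
      ring
    | a+1, b+1 =>
      rw [key (a+1) (b+1) k, ih a (b+1) (k+1) (by omega), ih (a+1) b (k+1) (by omega)]
      have hSX : ∑ j ∈ Finset.range (a+1+1), trm x (x+y) (b+1) (a+1+(b+1)) (k+1) j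
          = (∑ j ∈ Finset.range (a+1), trm x (x+y) (b+1) (a+(b+1)) (k+1+1) j)
            + ∑ j ∈ Finset.range (a+1+1), trm x (x+y) b (a+1+b) (k+1+1) j := by
        rw [Finset.sum_range_succ, Finset.sum_range_succ
          (fun j => trm x (x+y) b (a+1+b) (k+1+1) j)]
        have e : ∀ j ∈ Finset.range (a+1), trm x (x+y) (b+1) (a+1+(b+1)) (k+1) j
            = trm x (x+y) (b+1) (a+(b+1)) (k+1+1) j + trm x (x+y) b (a+1+b) (k+1+1) j := by
          intro j hj
          simp only [Finset.mem_range] at hj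
          rw [show a+1+(b+1) = (a+b+1)+1 from by omega, show a+(b+1) = a+b+1 from by omega,
            show a+1+b = a+b+1 from by omega]
          exact trm_pascal x (x+y) b (a+b+1) (k+1) j (by omega)
        have elast : trm x (x+y) (b+1) (a+1+(b+1)) (k+1) (a+1)
            = trm x (x+y) b (a+1+b) (k+1+1) (a+1) := by
          rw [show a+1+(b+1) = (a+1+b)+1 from by omega]
          exact trm_last x (x+y) b (a+1+b) (k+1) (a+1) (by omega)
        rw [Finset.sum_congr rfl e, Finset.sum_add_distrib, elast]
        ring
      have hSY : ∑ j ∈ Finset.range (b+1+1), trm y (x+y) (a+1) (a+1+(b+1)) (k+1) j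
          = (∑ j ∈ Finset.range (b+1+1), trm y (x+y) a (a+(b+1)) (k+1+1) j)
            + ∑ j ∈ Finset.range (b+1), trm y (x+y) (a+1) (a+1+b) (k+1+1) j := by
        rw [Finset.sum_range_succ, Finset.sum_range_succ
          (fun j => trm y (x+y) a (a+(b+1)) (k+1+1) j)]
        have e : ∀ j ∈ Finset.range (b+1), trm y (x+y) (a+1) (a+1+(b+1)) (k+1) j
            = trm y (x+y) a (a+(b+1)) (k+1+1) j + trm y (x+y) (a+1) (a+1+b) (k+1+1) j := by
          intro j hj
          simp only [Finset.mem_range] at hj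
          rw [show a+1+(b+1) = (a+b+1)+1 from by omega, show a+(b+1) = a+b+1 from by omega,
            show a+1+b = a+b+1 from by omega]
          have := trm_pascal y (x+y) a (a+b+1) (k+1) j (by omega)
          linarith [this]
        have elast : trm y (x+y) (a+1) (a+1+(b+1)) (k+1) (b+1)
            = trm y (x+y) a (a+(b+1)) (k+1+1) (b+1) := by
          rw [show a+1+(b+1) = (a+(b+1))+1 from by omega]
          exact trm_last y (x+y) a (a+(b+1)) (k+1) (b+1) (by omega)
        rw [Finset.sum_congr rfl e, Finset.sum_add_distrib, elast]
        ring
      rw [hSX, hSY]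
      ring

noncomputable def wittenSl4 (a b c d e f : ℕ) : ℝ :=
  ∑' (n₁ : ℕ) (n₂ : ℕ) (n₃ : ℕ),
    1 / ((n₁ + 1 : ℝ) ^ a * (n₂ + 1 : ℝ) ^ b * (n₃ + 1 : ℝ) ^ c *
      (n₁ + n₂ + 2 : ℝ) ^ d * (n₂ + n₃ + 2 : ℝ) ^ e * (n₁ + n₂ + n₃ + 3 : ℝ) ^ f)

noncomputable def Fw (a b c d e f : ℕ) (p : ℕ × ℕ × ℕ) : ℝ :=
  1 / ((p.1 + 1 : ℝ) ^ a * (p.2.1 + 1 : ℝ) ^ b * (p.2.2 + 1 : ℝ) ^ c *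
      (p.1 + p.2.1 + 2 : ℝ) ^ d * (p.2.1 + p.2.2 + 2 : ℝ) ^ e * (p.1 + p.2.1 + p.2.2 + 3 : ℝ) ^ f)

noncomputable def Gw (p : ℕ × ℕ × ℕ) : ℝ :=
  1 / ((p.1 + 1 : ℝ) ^ 2 * (p.2.1 + 1 : ℝ) ^ 2 * (p.2.2 + 1 : ℝ) ^ 2)

lemma sumGw : Summable Gw := by
  have h1 : Summable (fun n : ℕ => 1 / ((n : ℝ) + 1) ^ 2) := by
    have h0 : Summable (fun n : ℕ => 1 / (n : ℝ) ^ 2) :=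
      (Real.summable_one_div_nat_pow).2 one_lt_two
    have h2 := (summable_nat_add_iff (f := fun n : ℕ => 1 / (n : ℝ) ^ 2) 1).2 h0
    refine h2.congr fun n => ?_
    push_cast
    ring
  have hn : (0 : ℕ → ℝ) ≤ fun n : ℕ => 1 / ((n : ℝ) + 1) ^ 2 := by
    intro n
    simp only [Pi.zero_apply]
    positivity
  have h12 : Summable (fun q : ℕ × ℕ => (1 / ((q.1 : ℝ) + 1) ^ 2) * (1 / ((q.2 : ℝ) + 1) ^ 2)) :=
    h1.mul_of_nonneg h1 hn hn
  have hn2 : (0 : ℕ × ℕ → ℝ) ≤ fun q : ℕ × ℕ => (1 / ((q.1 : ℝ) + 1) ^ 2) * (1 / ((q.2 : ℝ) + 1) ^ 2) := by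
    intro q
    simp only [Pi.zero_apply]
    positivity
  have h123 := h1.mul_of_nonneg h12 hn hn2
  refine h123.congr fun p => ?_
  unfold Gw
  rw [div_mul_div_comm, one_mul, div_mul_div_comm, one_mul]
  congr 1
  ring

lemma sumFw (a b d d₁ d₂ : ℕ) (h1 : 2 ≤ a + d₁) (h2 : 2 ≤ b + d₂) (h3 : d₁ + d₂ ≤ d) :
    Summable (Fw a b 1 d 0 1) := by
  refine sumGw.of_nonneg_of_le (fun p => by unfold Fw; positivity) (fun p => ?_)
  obtain ⟨n₁, n₂, n₃⟩ := p
  simp only [Fw, Gw]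
  apply one_div_le_one_div_of_le
  · positivity
  · have hx1 : (1:ℝ) ≤ (n₁:ℝ) + 1 := by have := (Nat.cast_nonneg n₁ : (0:ℝ) ≤ n₁); linarith
    have hy1 : (1:ℝ) ≤ (n₂:ℝ) + 1 := by have := (Nat.cast_nonneg n₂ : (0:ℝ) ≤ n₂); linarith
    have hu1 : (1:ℝ) ≤ (n₁:ℝ) + (n₂:ℝ) + 2 := by
      have := (Nat.cast_nonneg n₁ : (0:ℝ) ≤ n₁); have := (Nat.cast_nonneg n₂ : (0:ℝ) ≤ n₂); linarith
    have hxu : (n₁:ℝ) + 1 ≤ (n₁:ℝ) + (n₂:ℝ) + 2 := by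
      have := (Nat.cast_nonneg n₂ : (0:ℝ) ≤ n₂); linarith
    have hyu : (n₂:ℝ) + 1 ≤ (n₁:ℝ) + (n₂:ℝ) + 2 := by
      have := (Nat.cast_nonneg n₁ : (0:ℝ) ≤ n₁); linarith
    have hwt : (n₃:ℝ) + 1 ≤ (n₁:ℝ) + (n₂:ℝ) + (n₃:ℝ) + 3 := by
      have := (Nat.cast_nonneg n₁ : (0:ℝ) ≤ n₁); have := (Nat.cast_nonneg n₂ : (0:ℝ) ≤ n₂); linarith
    calc ((n₁:ℝ)+1)^2 * ((n₂:ℝ)+1)^2 * ((n₃:ℝ)+1)^2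
        ≤ ((n₁:ℝ)+1)^(a+d₁) * ((n₂:ℝ)+1)^(b+d₂) * (((n₃:ℝ)+1) * ((n₁:ℝ)+(n₂:ℝ)+(n₃:ℝ)+3)) := by
          have e1 := pow_le_pow_right₀ hx1 h1
          have e2 := pow_le_pow_right₀ hy1 h2
          have e3 : ((n₃:ℝ)+1)^2 ≤ ((n₃:ℝ)+1) * ((n₁:ℝ)+(n₂:ℝ)+(n₃:ℝ)+3) := by
            rw [pow_two]
            exact mul_le_mul_of_nonneg_left hwt (by positivity)
          exact mul_le_mul (mul_le_mul e1 e2 (by positivity) (by positivity)) e3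
            (by positivity) (by positivity)
      _ = (((n₁:ℝ)+1)^a * ((n₂:ℝ)+1)^b * (((n₃:ℝ)+1) * ((n₁:ℝ)+(n₂:ℝ)+(n₃:ℝ)+3)))
            * (((n₁:ℝ)+1)^d₁ * ((n₂:ℝ)+1)^d₂) := by
          rw [pow_add, pow_add]; ring
      _ ≤ (((n₁:ℝ)+1)^a * ((n₂:ℝ)+1)^b * (((n₃:ℝ)+1) * ((n₁:ℝ)+(n₂:ℝ)+(n₃:ℝ)+3)))
            * (((n₁:ℝ)+(n₂:ℝ)+2)^d₁ * ((n₁:ℝ)+(n₂:ℝ)+2)^d₂) := by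
          refine mul_le_mul_of_nonneg_left ?_ (by positivity)
          exact mul_le_mul (pow_le_pow_left₀ (by positivity) hxu d₁)
            (pow_le_pow_left₀ (by positivity) hyu d₂) (by positivity) (by positivity)
      _ = (((n₁:ℝ)+1)^a * ((n₂:ℝ)+1)^b * (((n₃:ℝ)+1) * ((n₁:ℝ)+(n₂:ℝ)+(n₃:ℝ)+3)))
            * ((n₁:ℝ)+(n₂:ℝ)+2)^(d₁+d₂) := by rw [pow_add]
      _ ≤ (((n₁:ℝ)+1)^a * ((n₂:ℝ)+1)^b * (((n₃:ℝ)+1) * ((n₁:ℝ)+(n₂:ℝ)+(n₃:ℝ)+3)))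
            * ((n₁:ℝ)+(n₂:ℝ)+2)^d := by
          exact mul_le_mul_of_nonneg_left (pow_le_pow_right₀ hu1 h3) (by positivity)

      _ = ((n₁:ℝ)+1)^a * ((n₂:ℝ)+1)^b * ((n₃:ℝ)+1)^1 * ((n₁:ℝ)+(n₂:ℝ)+2)^d
            * ((n₂:ℝ)+(n₃:ℝ)+2)^0 * ((n₁:ℝ)+(n₂:ℝ)+(n₃:ℝ)+3)^1 := by
          rw [pow_zero, pow_one, pow_one]; ring

lemma witten_eq (a b c d e f : ℕ) (h : Summable (Fw a b c d e f)) :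
    wittenSl4 a b c d e f = ∑' p, Fw a b c d e f p := by
  rw [wittenSl4, Summable.tsum_prod' h (fun n₁ => h.prod_factor n₁)]
  exact tsum_congr fun n₁ =>
    (Summable.tsum_prod' (h.prod_factor n₁) (fun n₂ => (h.prod_factor n₁).prod_factor n₂)).symm

lemma Icc_range (m : ℕ) (f : ℕ → ℝ) :
    ∑ i ∈ Finset.Icc 1 m, f i = ∑ j ∈ Finset.range m, f (j+1) := by
  induction m with
  | zero => simp
  | succ m ih => rw [Finset.sum_Icc_succ_top (by omega), ih, Finset.sum_range_succ]

lemma point_eq (A B d : ℕ) (p : ℕ × ℕ × ℕ) :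
    Fw (A+1) (B+1) 1 d 0 1 p
    = (∑ i ∈ Finset.Icc 1 (A+1), ((A+1+(B+1)-i-1).choose (B+1-1) : ℝ) *
        Fw i 0 1 (A+1+(B+1)+d-i) 0 1 p)
    + (∑ i ∈ Finset.Icc 1 (B+1), ((A+1+(B+1)-i-1).choose (A+1-1) : ℝ) *
        Fw 0 i 1 (A+1+(B+1)+d-i) 0 1 p) := by
  obtain ⟨n₁, n₂, n₃⟩ := p
  rw [Icc_range, Icc_range]
  have hx : (0:ℝ) < (n₁:ℝ) + 1 := by positivity
  have hy : (0:ℝ) < (n₂:ℝ) + 1 := by positivity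
  have key := pf_aux ((n₁:ℝ)+1) ((n₂:ℝ)+1) hx hy (A+B) A B d le_rfl
  have hu : ((n₁:ℝ)+1) + ((n₂:ℝ)+1) = (n₁:ℝ)+(n₂:ℝ)+2 := by ring
  rw [hu] at key
  have expand : Fw (A+1) (B+1) 1 d 0 1 (n₁, n₂, n₃)
      = (1 / (((n₁:ℝ)+1)^(A+1) * ((n₂:ℝ)+1)^(B+1) * ((n₁:ℝ)+(n₂:ℝ)+2)^d))
        * (1 / (((n₃:ℝ)+1) * ((n₁:ℝ)+(n₂:ℝ)+(n₃:ℝ)+3))) := by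
    simp only [Fw]
    rw [div_mul_div_comm, one_mul]
    congr 1
    ring
  rw [expand, key, add_mul, Finset.sum_mul, Finset.sum_mul]
  congr 1
  · refine Finset.sum_congr rfl fun j hj => ?_
    simp only [Finset.mem_range] at hj
    rw [show A+1+(B+1)-(j+1)-1 = A+B-j from by omega,
      show B+1-1 = B from by omega,
      show A+1+(B+1)+d-(j+1) = A+B+(d+1)-j from by omega]
    simp only [trm, Fw]
    rw [pow_zero, pow_zero, pow_one, pow_one]
    rw [div_mul_div_comm, mul_one, mul_one_div]
    congr 1
    ring
  · refine Finset.sum_congr rfl fun j hj => ?_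
    simp only [Finset.mem_range] at hj
    rw [show A+1+(B+1)-(j+1)-1 = A+B-j from by omega,
      show A+1-1 = A from by omega,
      show A+1+(B+1)+d-(j+1) = A+B+(d+1)-j from by omega]
    simp only [trm, Fw]
    rw [pow_zero, pow_zero, pow_one, pow_one]
    rw [div_mul_div_comm, mul_one, mul_one_div]
    congr 1
    ring

theorem wittenSl4_ab1d01 (a b d : ℕ) (ha : 2 ≤ a) (hb : 2 ≤ b) (hd : 2 ≤ d) :
    wittenSl4 a b 1 d 0 1 =
      (∑ i ∈ Finset.Icc 1 a, (Nat.choose (a + b - i - 1) (b - 1) : ℝ) *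
        wittenSl4 i 0 1 (a + b + d - i) 0 1) +
      (∑ i ∈ Finset.Icc 1 b, (Nat.choose (a + b - i - 1) (a - 1) : ℝ) *
        wittenSl4 0 i 1 (a + b + d - i) 0 1) := by
  obtain ⟨A, rfl⟩ : ∃ A, a = A+1 := ⟨a-1, by omega⟩
  obtain ⟨B, rfl⟩ : ∃ B, b = B+1 := ⟨b-1, by omega⟩
  have hF0 : Summable (Fw (A+1) (B+1) 1 d 0 1) :=
    sumFw _ _ _ 0 0 (by omega) (by omega) (by omega)
  have hF1 : ∀ i ∈ Finset.Icc 1 (A+1), Summable (Fw i 0 1 (A+1+(B+1)+d-i) 0 1) := by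
    intro i hi
    simp only [Finset.mem_Icc] at hi
    exact sumFw _ _ _ 2 2 (by omega) (by omega) (by omega)
  have hF2 : ∀ i ∈ Finset.Icc 1 (B+1), Summable (Fw 0 i 1 (A+1+(B+1)+d-i) 0 1) := by
    intro i hi
    simp only [Finset.mem_Icc] at hi
    exact sumFw _ _ _ 2 2 (by omega) (by omega) (by omega)
  have hS1 : Summable (fun p => ∑ i ∈ Finset.Icc 1 (A+1),
      ((A+1+(B+1)-i-1).choose (B+1-1) : ℝ) * Fw i 0 1 (A+1+(B+1)+d-i) 0 1 p) :=
    summable_sum fun i hi => (hF1 i hi).mul_left _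
  have hS2 : Summable (fun p => ∑ i ∈ Finset.Icc 1 (B+1),
      ((A+1+(B+1)-i-1).choose (A+1-1) : ℝ) * Fw 0 i 1 (A+1+(B+1)+d-i) 0 1 p) :=
    summable_sum fun i hi => (hF2 i hi).mul_left _
  rw [witten_eq _ _ _ _ _ _ hF0, tsum_congr (point_eq A B d),
    Summable.tsum_add hS1 hS2,
    Summable.tsum_finsetSum (fun i hi => (hF1 i hi).mul_left _),
    Summable.tsum_finsetSum (fun i hi => (hF2 i hi).mul_left _)]
  congr 1
  · refine Finset.sum_congr rfl fun i hi => ?_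
    rw [tsum_mul_left, witten_eq _ _ _ _ _ _ (hF1 i hi)]
  · refine Finset.sum_congr rfl fun i hi => ?_
    rw [tsum_mul_left, witten_eq _ _ _ _ _ _ (hF2 i hi)]
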